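/- Suppose that for every real number μ in [0,1) there exists a Lebesgue measurable subset S of ℝ such that the Lebesgue measure of S ∩ [a, a+1] is at least μ for every real a, and such that there is no x ∈ S and no irrational Δ > 0 with x + nΔ ∈ S for all natural numbers n. Then for every real number λ in [0,1) there exists a Lebesgue measurable subset T of ℝ such that the Lebesgue measure of T ∩ [a, a+1] is at least λ for every real a, and such that there is no x ∈ T and no real Δ > 0 whatsoever with x + nΔ ∈ T for all natural numbers n. -/

import Mathlib

open MeasureTheory

/-- If for every `μ ∈ [0,1)` there is a measurable set meeting every unit interval in
measure at least `μ` and avoiding all infinite arithmetic progressions with positive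
irrational gap, then for every `λ ∈ [0,1)` there is a measurable set meeting every unit
interval in measure at least `λ` and avoiding all infinite arithmetic progressions with
any positive gap. -/
theorem stmt_5
    (h : ∀ μ : ℝ, μ ∈ Set.Ico (0 : ℝ) 1 → ∃ S : Set ℝ, MeasurableSet S ∧
      (∀ a : ℝ, ENNReal.ofReal μ ≤ volume (S ∩ Set.Icc a (a + 1))) ∧
      ¬ ∃ x ∈ S, ∃ Δ : ℝ, 0 < Δ ∧ Irrational Δ ∧ ∀ n : ℕ, x + (n : ℝ) * Δ ∈ S) :
    ∀ lam : ℝ, lam ∈ Set.Ico (0 : ℝ) 1 → ∃ T : Set ℝ, MeasurableSet T ∧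
      (∀ a : ℝ, ENNReal.ofReal lam ≤ volume (T ∩ Set.Icc a (a + 1))) ∧
      ¬ ∃ x ∈ T, ∃ Δ : ℝ, 0 < Δ ∧ ∀ n : ℕ, x + (n : ℝ) * Δ ∈ T := by
  intro lam hlam
  obtain ⟨hlam0, hlam1⟩ := hlam
  have hμmem : (1 - (1 - lam) / 3) ∈ Set.Ico (0 : ℝ) 1 :=
    ⟨by linarith, by linarith⟩
  obtain ⟨S, hSm, hSvol, hSap⟩ := h (1 - (1 - lam) / 3) hμmem
  set μ : ℝ := 1 - (1 - lam) / 3 with hμdef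
  set c : ℝ := Real.sqrt 2 with hcdef
  have hc2 : c ^ 2 = 2 := Real.sq_sqrt (by norm_num)
  have hc1 : 1 < c := by nlinarith [Real.sqrt_nonneg 2]
  have hc0 : 0 < c := lt_trans one_pos hc1
  have hcne : c ≠ 0 := ne_of_gt hc0
  -- complement bound: in every unit interval the complement of S has measure ≤ 1 - μ
  have key : ∀ b : ℝ, volume (Set.Icc b (b + 1) \ S) ≤ ENNReal.ofReal (1 - μ) := by
    intro b
    have htot : volume (Set.Icc b (b + 1) ∩ S) + volume (Set.Icc b (b + 1) \ S)
        = volume (Set.Icc b (b + 1)) := measure_inter_add_diff _ hSm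
    have hI : volume (Set.Icc b (b + 1)) = 1 := by
      rw [Real.volume_Icc]; norm_num
    have hle : ENNReal.ofReal μ ≤ volume (Set.Icc b (b + 1) ∩ S) := by
      rw [Set.inter_comm]; exact hSvol b
    have : volume (Set.Icc b (b + 1) \ S) + ENNReal.ofReal μ ≤ 1 := by
      calc volume (Set.Icc b (b + 1) \ S) + ENNReal.ofReal μ
          ≤ volume (Set.Icc b (b + 1) \ S) + volume (Set.Icc b (b + 1) ∩ S) := by
            gcongr
        _ = 1 := by rw [add_comm, htot, hI]
    have h1 : volume (Set.Icc b (b + 1) \ S) ≤ 1 - ENNReal.ofReal μ :=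
      ENNReal.le_sub_of_add_le_right ENNReal.ofReal_ne_top this
    calc volume (Set.Icc b (b + 1) \ S) ≤ 1 - ENNReal.ofReal μ := h1
      _ = ENNReal.ofReal 1 - ENNReal.ofReal μ := by rw [ENNReal.ofReal_one]
      _ = ENNReal.ofReal (1 - μ) := (ENNReal.ofReal_sub 1 hμmem.1).symm
  refine ⟨S ∩ (fun y => y * c⁻¹) ⁻¹' S,
    hSm.inter (hSm.preimage (measurable_id.mul_const c⁻¹)), ?_, ?_⟩
  · -- measure lower bound
    intro a
    set I := Set.Icc a (a + 1) with hIdef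
    have hI : volume I = 1 := by rw [hIdef, Real.volume_Icc]; norm_num
    -- bound the complement of the preimage part inside I
    have hpre : volume (I \ (fun y => y * c⁻¹) ⁻¹' S) ≤ ENNReal.ofReal (c * (1 - μ)) := by
      have hsub : I \ (fun y => y * c⁻¹) ⁻¹' S
          ⊆ (fun y => y * c⁻¹) ⁻¹' (Set.Icc (a * c⁻¹) (a * c⁻¹ + 1) \ S) := by
        intro y hy
        obtain ⟨hyI, hyS⟩ := hy
        refine ⟨⟨?_, ?_⟩, hyS⟩
        · exact mul_le_mul_of_nonneg_right hyI.1 (by positivity)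
        · have : y * c⁻¹ ≤ (a + 1) * c⁻¹ :=
            mul_le_mul_of_nonneg_right hyI.2 (by positivity)
          have hcinv : c⁻¹ ≤ 1 := by
            rw [inv_le_one_iff₀]; right; exact le_of_lt hc1
          nlinarith [this]
      calc volume (I \ (fun y => y * c⁻¹) ⁻¹' S)
          ≤ volume ((fun y => y * c⁻¹) ⁻¹' (Set.Icc (a * c⁻¹) (a * c⁻¹ + 1) \ S)) :=
            measure_mono hsub
        _ = ENNReal.ofReal |(c⁻¹)⁻¹| * volume (Set.Icc (a * c⁻¹) (a * c⁻¹ + 1) \ S) :=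
            Real.volume_preimage_mul_right (inv_ne_zero hcne) _
        _ ≤ ENNReal.ofReal c * ENNReal.ofReal (1 - μ) := by
            rw [inv_inv, abs_of_pos hc0]
            exact mul_le_mul_right (key _) _
        _ = ENNReal.ofReal (c * (1 - μ)) :=
            (ENNReal.ofReal_mul (le_of_lt hc0)).symm
    have hS1 : volume (I \ S) ≤ ENNReal.ofReal (1 - μ) := key a
    have hcompl : volume (I \ (S ∩ (fun y => y * c⁻¹) ⁻¹' S)) ≤ ENNReal.ofReal (1 - lam) := by
      have hunion : I \ (S ∩ (fun y => y * c⁻¹) ⁻¹' S)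
          ⊆ (I \ S) ∪ (I \ (fun y => y * c⁻¹) ⁻¹' S) := by
        intro y hy
        obtain ⟨hyI, hyT⟩ := hy
        by_cases hyS : y ∈ S
        · right; exact ⟨hyI, fun hmem => hyT ⟨hyS, hmem⟩⟩
        · left; exact ⟨hyI, hyS⟩
      calc volume (I \ (S ∩ (fun y => y * c⁻¹) ⁻¹' S))
          ≤ volume (I \ S) + volume (I \ (fun y => y * c⁻¹) ⁻¹' S) :=
            le_trans (measure_mono hunion) (measure_union_le _ _)
        _ ≤ ENNReal.ofReal (1 - μ) + ENNReal.ofReal (c * (1 - μ)) :=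
            add_le_add hS1 hpre
        _ = ENNReal.ofReal ((1 + c) * (1 - μ)) := by
            rw [← ENNReal.ofReal_add (by rw [hμdef]; linarith) (by rw [hμdef]; nlinarith)]
            ring_nf
        _ ≤ ENNReal.ofReal (1 - lam) := by
            apply ENNReal.ofReal_le_ofReal
            have hc3 : c < 3 := by nlinarith
            have h4 : 1 - μ = (1 - lam) / 3 := by rw [hμdef]; ring
            rw [h4]
            nlinarith
    have hsplit : volume (I ∩ (S ∩ (fun y => y * c⁻¹) ⁻¹' S))
        + volume (I \ (S ∩ (fun y => y * c⁻¹) ⁻¹' S)) = volume I :=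
      measure_inter_add_diff _ (hSm.inter (hSm.preimage (measurable_id.mul_const c⁻¹)))
    have h1 : (1 : ENNReal) ≤ volume (I ∩ (S ∩ (fun y => y * c⁻¹) ⁻¹' S))
        + ENNReal.ofReal (1 - lam) := by
      calc (1 : ENNReal) = volume I := hI.symm
        _ = volume (I ∩ (S ∩ (fun y => y * c⁻¹) ⁻¹' S))
            + volume (I \ (S ∩ (fun y => y * c⁻¹) ⁻¹' S)) := hsplit.symm
        _ ≤ _ := add_le_add_right hcompl _
    have h2 : (1 : ENNReal) - ENNReal.ofReal (1 - lam)
        ≤ volume (I ∩ (S ∩ (fun y => y * c⁻¹) ⁻¹' S)) :=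
      tsub_le_iff_right.mpr h1
    calc ENNReal.ofReal lam = ENNReal.ofReal (1 - (1 - lam)) := by norm_num
      _ = ENNReal.ofReal 1 - ENNReal.ofReal (1 - lam) :=
          ENNReal.ofReal_sub 1 (by linarith)
      _ = (1 : ENNReal) - ENNReal.ofReal (1 - lam) := by rw [ENNReal.ofReal_one]
      _ ≤ volume (I ∩ (S ∩ (fun y => y * c⁻¹) ⁻¹' S)) := h2
      _ = volume ((S ∩ (fun y => y * c⁻¹) ⁻¹' S) ∩ I) := by rw [Set.inter_comm]
  · -- no AP of any positive gap
    rintro ⟨x, ⟨hxS, hxS2⟩, Δ, hΔ, hAP⟩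
    have h1 : ¬ Irrational Δ := fun hIrr =>
      hSap ⟨x, hxS, Δ, hΔ, hIrr, fun n => (hAP n).1⟩
    have hΔc : 0 < Δ * c⁻¹ := by positivity
    have h2 : ¬ Irrational (Δ * c⁻¹) := by
      intro hIrr
      apply hSap
      refine ⟨x * c⁻¹, hxS2, Δ * c⁻¹, hΔc, hIrr, fun n => ?_⟩
      have hmem := (hAP n).2
      simp only [Set.mem_preimage] at hmem ⊢
      have heq : (x + (n : ℝ) * Δ) * c⁻¹ = x * c⁻¹ + (n : ℝ) * (Δ * c⁻¹) := by ring
      rwa [heq] at hmem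
    obtain ⟨q, hq⟩ := not_not.mp h1
    obtain ⟨r, hr⟩ := not_not.mp h2
    have hrne : (r : ℝ) ≠ 0 := by rw [hr]; exact ne_of_gt hΔc
    have hrne' : r ≠ 0 := fun hr0 => hrne (by rw [hr0]; norm_num)
    apply irrational_sqrt_two
    refine ⟨q / r, ?_⟩
    push_cast
    rw [hq, hr]
    field_simp
    exact hcdef
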